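/- Trace concatenation through residuals: if E is a cause-respecting RPES, t ∈ Traces(E), E' = E \ t, and t' ∈ Traces(E'), then tt' ∈ Traces(E), and moreover E \ (tt') = E' \ t'. -/
import Mathlib


/-- Data of a (labeled) reversible prime event structure (RPES) over actions `L`:
a carrier set of events, causality `lt`, conflict `conf`, labeling, a set `F` of
reversible events, reverse causality `rc` (`rc e u` means `e ≺ u̲`), prevention
`prev` (`prev e u` means `e ▷ u̲`), and an initial configuration `C0`. -/
structure RPESData (E : Type) (L : Type) where
  carrier : Set E
  lt : E → E → Prop
  conf : E → E → Prop
  label : E → L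
  F : Set E
  rc : E → E → Prop
  prev : E → E → Prop
  C0 : Set E

/-- Data of a (labeled) prime event structure (PES) with empty initial configuration. -/
structure PESData (E : Type) (L : Type) where
  carrier : Set E
  lt : E → E → Prop
  conf : E → E → Prop
  label : E → L

namespace RPESData

variable {E : Type} {L : Type}

/-- A set of events is conflict-free. -/
def ConflictFree (R : RPESData E L) (X : Set E) : Prop :=
  ∀ e ∈ X, ∀ e' ∈ X, ¬ R.conf e e'

/-- Sustained causation: `a ≪ b` iff `a < b` and, if `a` is reversible, `b ▷ a̲`. -/
def SC (R : RPESData E L) (a b : E) : Prop :=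
  R.lt a b ∧ (a ∈ R.F → R.prev b a)

/-- The axioms of a reversible prime event structure. -/
structure IsRPES (R : RPESData E L) : Prop where
  countable : R.carrier.Countable
  lt_carrier : ∀ a b, R.lt a b → a ∈ R.carrier ∧ b ∈ R.carrier
  conf_carrier : ∀ a b, R.conf a b → a ∈ R.carrier ∧ b ∈ R.carrier
  conf_irrefl : ∀ a, ¬ R.conf a a
  conf_symm : ∀ a b, R.conf a b → R.conf b a
  lt_irrefl : ∀ a, ¬ R.lt a a
  lt_trans : ∀ a b c, R.lt a b → R.lt b c → R.lt a c
  causes_finite : ∀ e, {e' | R.lt e' e}.Finite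
  causes_cf : ∀ e, R.ConflictFree {e' | R.lt e' e}
  F_carrier : R.F ⊆ R.carrier
  rc_carrier : ∀ a b, R.rc a b → a ∈ R.carrier ∧ b ∈ R.F
  rc_refl : ∀ u ∈ R.F, R.rc u u
  rcauses_finite : ∀ u ∈ R.F, {e | R.rc e u}.Finite
  rcauses_cf : ∀ u ∈ R.F, R.ConflictFree {e | R.rc e u}
  prev_carrier : ∀ a b, R.prev a b → a ∈ R.carrier ∧ b ∈ R.F
  prev_rc_disjoint : ∀ a b, ¬ (R.prev a b ∧ R.rc a b)
  sc_trans : ∀ a b c, R.SC a b → R.SC b c → R.SC a c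
  conf_hered_sc : ∀ a b c, R.conf a b → R.SC b c → R.conf a c
  C0_carrier : R.C0 ⊆ R.carrier
  C0_finite : R.C0.Finite
  C0_closed : ∀ e ∈ R.C0, ∀ e', R.lt e' e → e' ∈ R.C0
  C0_cf : R.ConflictFree R.C0

/-- A cause-respecting RPES: causality is sustained causation. -/
def CauseRespecting (R : RPESData E L) : Prop :=
  ∀ a b, R.lt a b → R.SC a b

/-- A causal RPES. -/
def Causal (R : RPESData E L) : Prop :=
  (∀ e, ∀ u ∈ R.F, (R.rc e u ↔ e = u)) ∧
  (∀ e, ∀ u ∈ R.F, (R.prev e u ↔ R.lt u e))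

/-- The mixed step `A ∪ B̲` is enabled at configuration `C`. -/
def Enabled (R : RPESData E L) (C A B : Set E) : Prop :=
  A.Finite ∧ B.Finite ∧ A ⊆ R.carrier ∧ B ⊆ R.F ∧
  A ∩ C = ∅ ∧ B ⊆ C ∧ R.ConflictFree (C ∪ A) ∧
  (∀ e ∈ A, ∀ e', R.lt e' e → e' ∈ C \ B) ∧
  (∀ e ∈ B, ∀ e', R.rc e' e → e' ∈ C \ (B \ {e})) ∧
  (∀ e ∈ B, ∀ e', R.prev e' e → e' ∉ C ∪ A)

/-- `IsTraceFrom R C t C'`: the sequence of mixed steps `t` can be executed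
starting at `C`, ending in `C'`. -/
def IsTraceFrom (R : RPESData E L) : Set E → List (Set E × Set E) → Set E → Prop
  | C, [], C' => C' = C
  | C, p :: t, C' => R.Enabled C p.1 p.2 ∧ R.IsTraceFrom ((C \ p.2) ∪ p.1) t C'

/-- `t` is a trace of `R` with `last(t) = C`. -/
def IsTraceTo (R : RPESData E L) (t : List (Set E × Set E)) (C : Set E) : Prop :=
  R.IsTraceFrom R.C0 t C

/-- `t` is a trace of `R`. -/
def IsTrace (R : RPESData E L) (t : List (Set E × Set E)) : Prop :=
  ∃ C, R.IsTraceTo t C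

/-- Reachable configurations: obtained from `C0` by mixed steps. -/
inductive ReachConf (R : RPESData E L) : Set E → Prop
  | init : ReachConf R R.C0
  | step : ∀ C A B, ReachConf R C → R.Enabled C A B → ReachConf R ((C \ B) ∪ A)

/-- Forwards reachable configurations: obtained from `C0` by forward steps only. -/
inductive FwdReachConf (R : RPESData E L) : Set E → Prop
  | init : FwdReachConf R R.C0
  | step : ∀ C A, FwdReachConf R C → R.Enabled C A ∅ → FwdReachConf R ((C \ ∅) ∪ A)

/-- The one-step removal operator: the residual of `R` after the step `A ∪ B̲`. -/
def residStep (R : RPESData E L) (A B : Set E) : RPESData E L :=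
  let At : Set E := (A \ R.F) ∪ {a | a ∈ R.F ∧ ∃ x ∈ A \ R.F, R.lt a x}
  let CA : Set E := {e | e ∈ R.carrier ∧ ∃ a ∈ At, R.conf e a}
  let E' : Set E := R.carrier \ (At ∪ CA)
  let F' : Set E := (R.F ∩ E') \
    ({e | e ∈ R.F ∧ ∃ a ∈ CA, R.rc a e} ∪ {e | e ∈ R.F ∧ ∃ a ∈ At, R.prev a e})
  { carrier := E'
    lt := fun a b => R.lt a b ∧ a ∈ E' ∧ b ∈ E'
    conf := fun a b => R.conf a b ∧ a ∈ E' ∧ b ∈ E'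
    label := R.label
    F := F'
    rc := fun a b => R.rc a b ∧ a ∈ E' ∧ b ∈ F'
    prev := fun a b => R.prev a b ∧ a ∈ E' ∧ b ∈ F'
    C0 := ((R.C0 \ B) ∪ A) ∩ E' }

/-- The residual `R \ t` of `R` after a trace `t`. -/
def resid (R : RPESData E L) (t : List (Set E × Set E)) : RPESData E L :=
  t.foldl (fun S p => S.residStep p.1 p.2) R

/-- The multiset (as a function `L → ℕ`) of action labels of the step `A ∪ B̲`. -/
noncomputable def stepLabel (R : RPESData E L) (A B : Set E) : L → ℕ :=
  fun a => Nat.card {e : E // e ∈ A ∪ B ∧ R.label e = a}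

/-- Forgetting the reversibility structure. -/
def toPES (R : RPESData E L) : PESData E L :=
  ⟨R.carrier, R.lt, R.conf, R.label⟩

end RPESData

namespace PESData

variable {E : Type} {L : Type}

/-- The axioms of a prime event structure. -/
structure IsPES (P : PESData E L) : Prop where
  countable : P.carrier.Countable
  lt_carrier : ∀ a b, P.lt a b → a ∈ P.carrier ∧ b ∈ P.carrier
  conf_carrier : ∀ a b, P.conf a b → a ∈ P.carrier ∧ b ∈ P.carrier
  lt_irrefl : ∀ a, ¬ P.lt a a
  lt_trans : ∀ a b c, P.lt a b → P.lt b c → P.lt a c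
  causes_finite : ∀ e, {e' | P.lt e' e}.Finite
  conf_irrefl : ∀ a, ¬ P.conf a a
  conf_symm : ∀ a b, P.conf a b → P.conf b a
  conf_hered : ∀ a b c, P.conf a b → P.lt b c → P.conf a c

/-- `φ(E, F)`: the RPES obtained from a PES by declaring the events in `F`
reversible, with `e ≺ e̲` for `e ∈ F` and `e ▷ e̲'` whenever `e' ∈ F`, `e' < e`. -/
def toRPES (P : PESData E L) (F : Set E) : RPESData E L :=
  { carrier := P.carrier
    lt := P.lt
    conf := P.conf
    label := P.label
    F := F
    rc := fun e u => u ∈ F ∧ e = u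
    prev := fun e u => u ∈ F ∧ P.lt u e
    C0 := ∅ }

end PESData

/-- A labeled transition system. -/
structure LTS (S : Type) (Λ : Type) where
  tr : S → Λ → S → Prop
  init : S

/-- Bisimulation between labeled transition systems. -/
def IsBisimulation {S S' Λ : Type} (T : LTS S Λ) (T' : LTS S' Λ)
    (Rl : S → S' → Prop) : Prop :=
  Rl T.init T'.init ∧
  (∀ s s', Rl s s' → ∀ M s₁, T.tr s M s₁ → ∃ s₁', T'.tr s' M s₁' ∧ Rl s₁ s₁') ∧
  (∀ s s', Rl s s' → ∀ M s₁', T'.tr s' M s₁' → ∃ s₁, T.tr s M s₁ ∧ Rl s₁ s₁')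

namespace RPESData

variable {E : Type} {L : Type}

/-- Transition relation of the configuration transition system `TC(R)`. -/
def confTr (R : RPESData E L) (C : Set E) (M : L → ℕ) (C' : Set E) : Prop :=
  R.ReachConf C ∧ ∃ A B, R.Enabled C A B ∧ C' = (C \ B) ∪ A ∧ M = R.stepLabel A B

/-- The configuration transition system `TC(R)`. -/
def TC (R : RPESData E L) : LTS (Set E) (L → ℕ) :=
  ⟨R.confTr, R.C0⟩

/-- Transition relation between residuals: `F ⇀^M F'` iff `F' = F \ (A ∪ B̲)` for
a one-step trace `A ∪ B̲` of `F` with label multiset `M`. -/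
def residTr (R' : RPESData E L) (M : L → ℕ) (R'' : RPESData E L) : Prop :=
  ∃ A B, R'.Enabled R'.C0 A B ∧ R'' = R'.residStep A B ∧ M = R'.stepLabel A B

/-- Residuals reachable from `R` via `residTr`. -/
inductive ReachRes (R : RPESData E L) : RPESData E L → Prop
  | init : ReachRes R R
  | step : ∀ R' M R'', ReachRes R R' → residTr R' M R'' → ReachRes R R''

/-- The residual transition system `TE(R)`. -/
def TE (R : RPESData E L) : LTS (RPESData E L) (L → ℕ) :=
  ⟨residTr, R⟩

end RPESData

namespace RPESData

variable {E : Type} {L : Type}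

/-- Events pinned in configuration `C`: they can never leave `C`. -/
inductive Pinned (R : RPESData E L) (C : Set E) : E → Prop
  | base (c : E) (hc : c ∈ C) (hnF : c ∉ R.F) : Pinned R C c
  | prev (c w : E) (hc : c ∈ C) (hp : R.prev w c) (hw : Pinned R C w) : Pinned R C c
  | rc (c w a : E) (hc : c ∈ C) (hr : R.rc w c) (hwC : w ∉ C)
      (ha : Pinned R C a) (hconf : R.conf w a) : Pinned R C c

lemma Pinned.mem {R : RPESData E L} {C : Set E} {c : E} (h : Pinned R C c) : c ∈ C := by
  cases h <;> assumption

def Ats (R : RPESData E L) (A : Set E) : Set E :=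
  (A \ R.F) ∪ {a | a ∈ R.F ∧ ∃ x ∈ A \ R.F, R.lt a x}

def CAs (R : RPESData E L) (A : Set E) : Set E :=
  {e | e ∈ R.carrier ∧ ∃ a ∈ R.Ats A, R.conf e a}

def Ecar (R : RPESData E L) (A : Set E) : Set E := R.carrier \ (R.Ats A ∪ R.CAs A)

def Fres (R : RPESData E L) (A : Set E) : Set E :=
  (R.F ∩ R.Ecar A) \
    ({e | e ∈ R.F ∧ ∃ a ∈ R.CAs A, R.rc a e} ∪ {e | e ∈ R.F ∧ ∃ a ∈ R.Ats A, R.prev a e})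

lemma residStep_eq (R : RPESData E L) (A B : Set E) :
    R.residStep A B =
      { carrier := R.Ecar A
        lt := fun a b => R.lt a b ∧ a ∈ R.Ecar A ∧ b ∈ R.Ecar A
        conf := fun a b => R.conf a b ∧ a ∈ R.Ecar A ∧ b ∈ R.Ecar A
        label := R.label
        F := R.Fres A
        rc := fun a b => R.rc a b ∧ a ∈ R.Ecar A ∧ b ∈ R.Fres A
        prev := fun a b => R.prev a b ∧ a ∈ R.Ecar A ∧ b ∈ R.Fres A
        C0 := ((R.C0 \ B) ∪ A) ∩ R.Ecar A } := rfl

/-- The invariant relating the original RPES `R` at current configuration `C`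
with a residual structure `R₁` (whose current configuration is `C ∩ R₁.carrier`). -/
structure Inv (R : RPESData E L) (C : Set E) (R₁ : RPESData E L) : Prop where
  car : R₁.carrier ⊆ R.carrier
  lt_iff : ∀ a b, R₁.lt a b ↔ R.lt a b ∧ a ∈ R₁.carrier ∧ b ∈ R₁.carrier
  conf_iff : ∀ a b, R₁.conf a b ↔ R.conf a b ∧ a ∈ R₁.carrier ∧ b ∈ R₁.carrier
  F_sub : R₁.F ⊆ R.F
  F_car : R₁.F ⊆ R₁.carrier
  rc_iff : ∀ a b, R₁.rc a b ↔ R.rc a b ∧ a ∈ R₁.carrier ∧ b ∈ R₁.F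
  prev_iff : ∀ a b, R₁.prev a b ↔ R.prev a b ∧ a ∈ R₁.carrier ∧ b ∈ R₁.F
  C_sub : C ⊆ R.carrier
  C_cf : R.ConflictFree C
  lt_closed : ∀ e ∈ R₁.carrier, ∀ d, R.lt d e → d ∈ R₁.carrier ∨ d ∈ C
  rc_closed : ∀ u ∈ R₁.F, ∀ d, R.rc d u → d ∈ R₁.carrier ∨ d ∈ C
  prev_out : ∀ u ∈ R₁.F, ∀ d, R.prev d u → d ∈ C → d ∈ R₁.carrier
  conf_out : ∀ d ∈ C, d ∉ R₁.carrier → ∀ e ∈ R₁.carrier, ¬ R.conf d e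
  removed : ∀ d ∈ R.carrier, d ∉ R₁.carrier →
      Pinned R C d ∨ (d ∉ C ∧ ∃ a, Pinned R C a ∧ R.conf d a)
  unF : ∀ b ∈ R.F, b ∈ R₁.carrier → b ∉ R₁.F →
      (∃ w, R.rc w b ∧ w ∉ C ∧ ∃ a, Pinned R C a ∧ R.conf w a) ∨
      (∃ w, R.prev w b ∧ Pinned R C w)

/-- Base case of the invariant. -/
lemma inv_self (R : RPESData E L) (h : R.IsRPES) : Inv R R.C0 R where
  car := le_refl _
  lt_iff a b := ⟨fun hl => ⟨hl, h.lt_carrier a b hl⟩, fun h => h.1⟩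
  conf_iff a b := ⟨fun hl => ⟨hl, h.conf_carrier a b hl⟩, fun h => h.1⟩
  F_sub := le_refl _
  F_car := h.F_carrier
  rc_iff a b := ⟨fun hl => ⟨hl, (h.rc_carrier a b hl).1, (h.rc_carrier a b hl).2⟩, fun h => h.1⟩
  prev_iff a b := ⟨fun hl => ⟨hl, (h.prev_carrier a b hl).1, (h.prev_carrier a b hl).2⟩,
    fun h => h.1⟩
  C_sub := h.C0_carrier
  C_cf := h.C0_cf
  lt_closed e _ d hd := Or.inl (h.lt_carrier d e hd).1
  rc_closed u _ d hd := Or.inl (h.rc_carrier d u hd).1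
  prev_out u _ d hd _ := (h.prev_carrier d u hd).1
  conf_out d hd hdn e he hc := hdn (h.conf_carrier d e hc).1
  removed d hd hdn := absurd hd hdn
  unF b hb hbc hbn := absurd hb hbn


section Main

variable {R R₁ : RPESData E L} {C A B : Set E}

/-- Events in conflict with a pinned event can never be (re-)added. -/
lemma conf_pinned_notMem (h : R.IsRPES) (inv : Inv R C R₁)
    (hen : R₁.Enabled (C ∩ R₁.carrier) A B) {w a : E}
    (ha : Pinned R C a) (hconf : R.conf w a) : w ∉ A := by
  intro hwA
  obtain ⟨-, -, hA1, -, -, -, hcf, -⟩ := hen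
  have haC : a ∈ C := ha.mem
  by_cases haE : a ∈ R₁.carrier
  · exact hcf w (Or.inr hwA) a (Or.inl ⟨haC, haE⟩)
      ((inv.conf_iff w a).2 ⟨hconf, hA1 hwA, haE⟩)
  · exact inv.conf_out a haC haE w (hA1 hwA) (h.conf_symm w a hconf)

/-- Pinned events stay pinned after a step of the residual structure. -/
lemma Pinned.step (h : R.IsRPES) (inv : Inv R C R₁)
    (hen : R₁.Enabled (C ∩ R₁.carrier) A B) {d : E}
    (hd : Pinned R C d) : Pinned R ((C \ B) ∪ A) d := by
  obtain ⟨-, -, hA1, hBF, -, -, hcf, -, hrcs, hprevs⟩ := id hen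
  induction hd with
  | base c hc hnF =>
      exact Pinned.base c (Or.inl ⟨hc, fun hcB => hnF (inv.F_sub (hBF hcB))⟩) hnF
  | prev c w hc hp hw ih =>
      refine Pinned.prev c w (Or.inl ⟨hc, fun hcB => ?_⟩) hp ih
      have hcF : c ∈ R₁.F := hBF hcB
      have hwE : w ∈ R₁.carrier := inv.prev_out c hcF w hp hw.mem
      exact hprevs c hcB w ((inv.prev_iff w c).2 ⟨hp, hwE, hcF⟩)
        (Or.inl ⟨hw.mem, hwE⟩)
  | rc c w a hc hr hwC ha hconf ih =>
      have hcn : c ∈ (C \ B) ∪ A := by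
        refine Or.inl ⟨hc, fun hcB => ?_⟩
        have hcF : c ∈ R₁.F := hBF hcB
        have hwE : w ∈ R₁.carrier := by
          rcases inv.rc_closed c hcF w hr with h1 | h1
          · exact h1
          · exact absurd h1 hwC
        have := hrcs c hcB w ((inv.rc_iff w c).2 ⟨hr, hwE, hcF⟩)
        exact hwC this.1.1
      refine Pinned.rc c w a hcn hr ?_ ih hconf
      rintro (⟨hw1, -⟩ | hw1)
      · exact hwC hw1
      · exact conf_pinned_notMem h inv hen ha hconf hw1


/-- Conflict-freeness of `C ∪ A` in `R`, from a step of the residual. -/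
lemma cf_union (h : R.IsRPES) (inv : Inv R C R₁)
    (hen : R₁.Enabled (C ∩ R₁.carrier) A B) : R.ConflictFree (C ∪ A) := by
  obtain ⟨-, -, hA1, -, -, -, hcf, -⟩ := id hen
  have key : ∀ e ∈ C, ∀ e' ∈ A, ¬ R.conf e e' := by
    intro e he e' he' hc
    by_cases heE : e ∈ R₁.carrier
    · exact hcf e (Or.inl ⟨he, heE⟩) e' (Or.inr he')
        ((inv.conf_iff e e').2 ⟨hc, heE, hA1 he'⟩)
    · exact inv.conf_out e he heE e' (hA1 he') hc
  rintro e (he | he) e' (he' | he') hc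
  · exact inv.C_cf e he e' he' hc
  · exact key e he e' he' hc
  · exact key e' he' e he (h.conf_symm e e' hc)
  · exact hcf e (Or.inr he) e' (Or.inr he')
      ((inv.conf_iff e e').2 ⟨hc, hA1 he, hA1 he'⟩)

/-- A step of the residual structure is a step of the original structure. -/
lemma enabled_lift (h : R.IsRPES) (inv : Inv R C R₁)
    (hen : R₁.Enabled (C ∩ R₁.carrier) A B) : R.Enabled C A B := by
  obtain ⟨hAf, hBf, hA1, hBF, hAC, hBC, hcf, hcauses, hrcs, hprevs⟩ := id hen
  have hB1 : B ⊆ R₁.carrier := fun b hb => inv.F_car (hBF hb)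
  refine ⟨hAf, hBf, fun a ha => inv.car (hA1 ha), fun b hb => inv.F_sub (hBF hb),
    ?_, fun b hb => ((hBC hb).1), ?_, ?_, ?_, ?_⟩
  · ext x
    simp only [Set.mem_inter_iff, Set.mem_empty_iff_false, iff_false, not_and]
    intro hxA hxC
    have : x ∈ A ∩ (C ∩ R₁.carrier) := ⟨hxA, hxC, hA1 hxA⟩
    rw [hAC] at this
    exact this
  · exact cf_union h inv hen
  · -- causes of events of A
    intro e he d hd
    rcases inv.lt_closed e (hA1 he) d hd with hdE | hdC
    · have := hcauses e he d ((inv.lt_iff d e).2 ⟨hd, hdE, hA1 he⟩)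
      exact ⟨this.1.1, this.2⟩
    · refine ⟨hdC, fun hdB => ?_⟩
      have := hcauses e he d ((inv.lt_iff d e).2 ⟨hd, hB1 hdB, hA1 he⟩)
      exact this.2 hdB
  · -- reverse causes of events of B
    intro u hu d hd
    rcases inv.rc_closed u (hBF hu) d hd with hdE | hdC
    · have := hrcs u hu d ((inv.rc_iff d u).2 ⟨hd, hdE, hBF hu⟩)
      exact ⟨this.1.1, this.2⟩
    · refine ⟨hdC, fun hdB => ?_⟩
      have := hrcs u hu d ((inv.rc_iff d u).2 ⟨hd, hB1 hdB.1, hBF hu⟩)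
      exact this.2 hdB
  · -- preventers of events of B
    intro u hu d hd
    rintro (hdC | hdA)
    · have hdE : d ∈ R₁.carrier := inv.prev_out u (hBF hu) d hd hdC
      exact hprevs u hu d ((inv.prev_iff d u).2 ⟨hd, hdE, hBF hu⟩) (Or.inl ⟨hdC, hdE⟩)
    · have hdE : d ∈ R₁.carrier := hA1 hdA
      exact hprevs u hu d ((inv.prev_iff d u).2 ⟨hd, hdE, hBF hu⟩) (Or.inr hdA)

/-- A step of the original structure from `C` is a step of the residual structure. -/
lemma enabled_down (h : R.IsRPES) (inv : Inv R C R₁)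
    (hen : R.Enabled C A B) : R₁.Enabled (C ∩ R₁.carrier) A B := by
  obtain ⟨hAf, hBf, hAc, hBF, hAC, hBC, hcf, hcauses, hrcs, hprevs⟩ := id hen
  have hnAC : ∀ a ∈ A, a ∉ C := by
    intro a ha hc
    have : a ∈ A ∩ C := ⟨ha, hc⟩
    rw [hAC] at this; exact this
  have hA1 : A ⊆ R₁.carrier := by
    intro a ha
    by_contra haE
    rcases inv.removed a (hAc ha) haE with hp | ⟨-, p, hp, hcp⟩
    · exact hnAC a ha hp.mem
    · exact hcf a (Or.inr ha) p (Or.inl hp.mem) hcp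
  have hB1 : B ⊆ R₁.F := by
    intro b hb
    have hbE : b ∈ R₁.carrier := by
      by_contra hbE
      rcases inv.removed b (h.F_carrier (hBF hb)) hbE with hp | ⟨hbC, -⟩
      · cases hp with
        | base c hc hnF => exact hnF (hBF hb)
        | prev c w hc hp2 hw => exact hprevs b hb w hp2 (Or.inl hw.mem)
        | rc c w a hc hr hwC ha hconf => exact hwC (hrcs b hb w hr).1
      · exact hbC (hBC hb)
    by_contra hbF
    rcases inv.unF b (hBF hb) hbE hbF with ⟨w, hrc, hwC, -⟩ | ⟨w, hp, hpin⟩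
    · exact hwC (hrcs b hb w hrc).1
    · exact hprevs b hb w hp (Or.inl hpin.mem)
  refine ⟨hAf, hBf, hA1, hB1, ?_, fun b hb => ⟨hBC hb, inv.F_car (hB1 hb)⟩, ?_, ?_, ?_, ?_⟩
  · refine Set.eq_empty_iff_forall_notMem.mpr ?_
    rintro x ⟨hxA, hxC, -⟩
    exact hnAC x hxA hxC
  · intro e he e' he' hc
    have hc' : R.conf e e' := ((inv.conf_iff e e').1 hc).1
    rcases he with he | he <;> rcases he' with he' | he'
    · exact hcf e (Or.inl he.1) e' (Or.inl he'.1) hc'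
    · exact hcf e (Or.inl he.1) e' (Or.inr he') hc'
    · exact hcf e (Or.inr he) e' (Or.inl he'.1) hc'
    · exact hcf e (Or.inr he) e' (Or.inr he') hc'
  · intro e he d hd
    have hd' := (inv.lt_iff d e).1 hd
    have := hcauses e he d hd'.1
    exact ⟨⟨this.1, hd'.2.1⟩, this.2⟩
  · intro u hu d hd
    have hd' := (inv.rc_iff d u).1 hd
    have := hrcs u hu d hd'.1
    exact ⟨⟨this.1, hd'.2.1⟩, this.2⟩
  · intro u hu d hd
    have hd' := (inv.prev_iff d u).1 hd
    have := hprevs u hu d hd'.1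
    rintro (hdC | hdA)
    · exact this (Or.inl hdC.1)
    · exact this (Or.inr hdA)

/-- The invariant is preserved when the configuration advances but the residual
structure is kept (used for the steps of `t'`). -/
lemma inv_step_config (h : R.IsRPES) (inv : Inv R C R₁)
    (hen : R₁.Enabled (C ∩ R₁.carrier) A B) : Inv R ((C \ B) ∪ A) R₁ := by
  obtain ⟨-, -, hA1, hBF, -, -, hcf, -, hrcs, hprevs⟩ := id hen
  have hB1 : B ⊆ R₁.carrier := fun b hb => inv.F_car (hBF hb)
  have hCn : (C \ B) ∪ A ⊆ C ∪ A := by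
    rintro x (hx | hx); exacts [Or.inl hx.1, Or.inr hx]
  refine ⟨inv.car, inv.lt_iff, inv.conf_iff, inv.F_sub, inv.F_car, inv.rc_iff,
    inv.prev_iff, ?_, ?_, ?_, ?_, ?_, ?_, ?_, ?_⟩
  · rintro x (hx | hx); exacts [inv.C_sub hx.1, inv.car (hA1 hx)]
  · intro e he e' he' hc
    exact cf_union h inv hen e (hCn he) e' (hCn he') hc
  · intro e he d hd
    rcases inv.lt_closed e he d hd with hdE | hdC
    · exact Or.inl hdE
    · by_cases hdB : d ∈ B
      · exact Or.inl (hB1 hdB)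
      · exact Or.inr (Or.inl ⟨hdC, hdB⟩)
  · intro u hu d hd
    rcases inv.rc_closed u hu d hd with hdE | hdC
    · exact Or.inl hdE
    · by_cases hdB : d ∈ B
      · exact Or.inl (hB1 hdB)
      · exact Or.inr (Or.inl ⟨hdC, hdB⟩)
  · rintro u hu d hd (hdC | hdA)
    · exact inv.prev_out u hu d hd hdC.1
    · exact hA1 hdA
  · rintro d (hdC | hdA) hdE e heE hc
    · exact inv.conf_out d hdC.1 hdE e heE hc
    · exact hdE (hA1 hdA)
  · intro d hdc hdE
    rcases inv.removed d hdc hdE with hp | ⟨hdC, a, ha, hca⟩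
    · exact Or.inl (hp.step h inv hen)
    · refine Or.inr ⟨?_, a, ha.step h inv hen, hca⟩
      rintro (hd | hd)
      · exact hdC hd.1
      · exact conf_pinned_notMem h inv hen ha hca hd
  · intro b hb hbE hbF
    rcases inv.unF b hb hbE hbF with ⟨w, hrc, hwC, a, ha, hca⟩ | ⟨w, hp, hpin⟩
    · refine Or.inl ⟨w, hrc, ?_, a, ha.step h inv hen, hca⟩
      rintro (hw | hw)
      · exact hwC hw.1
      · exact conf_pinned_notMem h inv hen ha hca hw
    · exact Or.inr ⟨w, hp, hpin.step h inv hen⟩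


lemma mem_Ats {R : RPESData E L} {A : Set E} {x : E} :
    x ∈ R.Ats A ↔ x ∈ A \ R.F ∨ (x ∈ R.F ∧ ∃ y ∈ A \ R.F, R.lt x y) := Iff.rfl

lemma mem_Ecar {R : RPESData E L} {A : Set E} {x : E} :
    x ∈ R.Ecar A ↔ x ∈ R.carrier ∧ ¬(x ∈ R.Ats A ∨ x ∈ R.CAs A) := Iff.rfl

/-- The invariant is preserved when the residual structure advances by a step
(used for the steps of `t`). -/
lemma inv_step_resid (h : R.IsRPES) (hcr : R.CauseRespecting) (inv : Inv R C R₁)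
    (hen : R₁.Enabled (C ∩ R₁.carrier) A B) :
    Inv R ((C \ B) ∪ A) (R₁.residStep A B) := by
  obtain ⟨-, -, hA1, hBF, hAC, hBC, hcf, hcauses, hrcs, hprevs⟩ := id hen
  have hB1 : B ⊆ R₁.carrier := fun b hb => inv.F_car (hBF hb)
  have hsub : ((C ∩ R₁.carrier) \ B) ∪ A ⊆ (C ∩ R₁.carrier) ∪ A := by
    rintro x (hx | hx); exacts [Or.inl hx.1, Or.inr hx]
  have hAt1 : R₁.Ats A ⊆ ((C ∩ R₁.carrier) \ B) ∪ A := by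
    intro x hx
    rcases mem_Ats.1 hx with hx1 | ⟨hxF, y, hy, hlt⟩
    · exact Or.inr hx1.1
    · exact Or.inl (hcauses y hy.1 x hlt)
  have hAtC : R₁.Ats A ⊆ (C \ B) ∪ A := by
    intro x hx
    rcases hAt1 hx with h1 | h1
    exacts [Or.inl ⟨h1.1.1, h1.2⟩, Or.inr h1]
  have hAtE : R₁.Ats A ⊆ R₁.carrier := by
    intro x hx
    rcases mem_Ats.1 hx with hx1 | ⟨hxF, -⟩
    exacts [hA1 hx1.1, inv.F_car hxF]
  have hCnE : ((C \ B) ∪ A) ∩ R₁.carrier ⊆ ((C ∩ R₁.carrier) \ B) ∪ A := by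
    rintro x ⟨hx | hx, hxE⟩
    exacts [Or.inl ⟨⟨hx.1, hxE⟩, hx.2⟩, Or.inr hx]
  have hCAn : ∀ x ∈ R₁.CAs A, x ∉ (C \ B) ∪ A := by
    rintro x ⟨hxE, a, haAt, hconf⟩ hxCn
    exact hcf x (hsub (hCnE ⟨hxCn, hxE⟩)) a (hsub (hAt1 haAt)) hconf
  have hB2 : B ⊆ R₁.Ecar A := by
    intro b hb
    have hbC1 : b ∈ C ∩ R₁.carrier := hBC hb
    refine ⟨hbC1.2, ?_⟩
    rintro (hAt | hCA)
    · rcases hAt1 hAt with h1 | h1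
      · exact h1.2 hb
      · have : b ∈ A ∩ (C ∩ R₁.carrier) := ⟨h1, hbC1⟩
        rw [hAC] at this; exact this
    · obtain ⟨-, a, haAt, hconf⟩ := hCA
      exact hcf b (Or.inl hbC1) a (hsub (hAt1 haAt)) hconf
  have hPinAF : ∀ x, x ∈ A → x ∉ R₁.F → Pinned R ((C \ B) ∪ A) x := by
    intro x hxA hxF
    have hxCn : x ∈ (C \ B) ∪ A := Or.inr hxA
    by_cases hxRF : x ∈ R.F
    · rcases inv.unF x hxRF (hA1 hxA) hxF with ⟨w, hrc, hwC, a, ha, hca⟩ | ⟨w, hp, hpin⟩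
      · refine Pinned.rc x w a hxCn hrc ?_ (ha.step h inv hen) hca
        rintro (hw | hw)
        exacts [hwC hw.1, conf_pinned_notMem h inv hen ha hca hw]
      · exact Pinned.prev x w hxCn hp (hpin.step h inv hen)
    · exact Pinned.base x hxCn hxRF
  have hPinAt : ∀ x ∈ R₁.Ats A, Pinned R ((C \ B) ∪ A) x := by
    intro x hx
    rcases mem_Ats.1 hx with hx1 | ⟨hxF, y, hy, hlt⟩
    · exact hPinAF x hx1.1 hx1.2
    · have hxRF : x ∈ R.F := inv.F_sub hxF
      have hlt' : R.lt x y := ((inv.lt_iff x y).1 hlt).1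
      exact Pinned.prev x y (hAtC hx) ((hcr x y hlt').2 hxRF) (hPinAF y hy.1 hy.2)
  have hE21 : R₁.Ecar A ⊆ R₁.carrier := fun x hx => hx.1
  have hF21 : R₁.Fres A ⊆ R₁.F := fun x hx => hx.1.1
  have hF2E : R₁.Fres A ⊆ R₁.Ecar A := fun x hx => hx.1.2
  rw [residStep_eq]
  refine ⟨fun x hx => inv.car (hE21 hx), ?_, ?_, ?_, ?_, ?_, ?_, ?_, ?_, ?_, ?_, ?_, ?_, ?_, ?_⟩
  · -- lt_iff
    intro a b
    constructor
    · rintro ⟨hl, ha, hb⟩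
      exact ⟨((inv.lt_iff a b).1 hl).1, ha, hb⟩
    · rintro ⟨hl, ha, hb⟩
      exact ⟨(inv.lt_iff a b).2 ⟨hl, hE21 ha, hE21 hb⟩, ha, hb⟩
  · -- conf_iff
    intro a b
    constructor
    · rintro ⟨hl, ha, hb⟩
      exact ⟨((inv.conf_iff a b).1 hl).1, ha, hb⟩
    · rintro ⟨hl, ha, hb⟩
      exact ⟨(inv.conf_iff a b).2 ⟨hl, hE21 ha, hE21 hb⟩, ha, hb⟩
  · -- F_sub
    exact fun x hx => inv.F_sub (hF21 hx)
  · -- F_car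
    exact hF2E
  · -- rc_iff
    intro a b
    constructor
    · rintro ⟨hl, ha, hb⟩
      exact ⟨((inv.rc_iff a b).1 hl).1, ha, hb⟩
    · rintro ⟨hl, ha, hb⟩
      exact ⟨(inv.rc_iff a b).2 ⟨hl, hE21 ha, hF21 hb⟩, ha, hb⟩
  · -- prev_iff
    intro a b
    constructor
    · rintro ⟨hl, ha, hb⟩
      exact ⟨((inv.prev_iff a b).1 hl).1, ha, hb⟩
    · rintro ⟨hl, ha, hb⟩
      exact ⟨(inv.prev_iff a b).2 ⟨hl, hE21 ha, hF21 hb⟩, ha, hb⟩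
  · -- C_sub
    rintro x (hx | hx)
    exacts [inv.C_sub hx.1, inv.car (hA1 hx)]
  · -- C_cf
    intro e he e' he' hc
    have hCn : (C \ B) ∪ A ⊆ C ∪ A := by
      rintro x (hx | hx); exacts [Or.inl hx.1, Or.inr hx]
    exact cf_union h inv hen e (hCn he) e' (hCn he') hc
  · -- lt_closed
    intro e he d hd
    rcases inv.lt_closed e (hE21 he) d hd with hdE | hdC
    · by_cases hdE2 : d ∈ R₁.Ecar A
      · exact Or.inl hdE2
      · have hor : d ∈ R₁.Ats A ∨ d ∈ R₁.CAs A := by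
          by_contra hno; exact hdE2 ⟨hdE, hno⟩
        rcases hor with hdAt | hdCA
        · exact Or.inr (hAtC hdAt)
        · exfalso
          obtain ⟨-, a, haAt, hconf⟩ := hdCA
          have hconf' : R.conf a d := h.conf_symm d a ((inv.conf_iff d a).1 hconf).1
          have hae : R.conf a e := h.conf_hered_sc a d e hconf' (hcr d e hd)
          have : e ∈ R₁.CAs A :=
            ⟨hE21 he, a, haAt, (inv.conf_iff e a).2 ⟨h.conf_symm a e hae, hE21 he, hAtE haAt⟩⟩
          exact he.2 (Or.inr this)
    · by_cases hdB : d ∈ B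
      · exact Or.inl (hB2 hdB)
      · exact Or.inr (Or.inl ⟨hdC, hdB⟩)
  · -- rc_closed
    intro u hu d hd
    have huF1 : u ∈ R₁.F := hF21 hu
    rcases inv.rc_closed u huF1 d hd with hdE | hdC
    · by_cases hdE2 : d ∈ R₁.Ecar A
      · exact Or.inl hdE2
      · have hor : d ∈ R₁.Ats A ∨ d ∈ R₁.CAs A := by
          by_contra hno; exact hdE2 ⟨hdE, hno⟩
        rcases hor with hdAt | hdCA
        · exact Or.inr (hAtC hdAt)
        · exfalso
          exact hu.2 (Or.inl ⟨huF1, d, hdCA, (inv.rc_iff d u).2 ⟨hd, hdE, huF1⟩⟩)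
    · by_cases hdB : d ∈ B
      · exact Or.inl (hB2 hdB)
      · exact Or.inr (Or.inl ⟨hdC, hdB⟩)
  · -- prev_out
    intro u hu d hd hdCn
    have huF1 : u ∈ R₁.F := hF21 hu
    by_cases hdE1 : d ∈ R₁.carrier
    · refine ⟨hdE1, ?_⟩
      rintro (hdAt | hdCA)
      · exact hu.2 (Or.inr ⟨huF1, d, hdAt, (inv.prev_iff d u).2 ⟨hd, hdE1, huF1⟩⟩)
      · exact hCAn d hdCA hdCn
    · exfalso
      have hdC : d ∈ C := by
        rcases hdCn with h1 | h1
        exacts [h1.1, absurd (hA1 h1) hdE1]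
      exact hdE1 (inv.prev_out u huF1 d hd hdC)
  · -- conf_out
    intro d hdCn hdE2 e heE2 hc
    by_cases hdE1 : d ∈ R₁.carrier
    · have hor : d ∈ R₁.Ats A ∨ d ∈ R₁.CAs A := by
        by_contra hno; exact hdE2 ⟨hdE1, hno⟩
      rcases hor with hdAt | hdCA
      · exact heE2.2 (Or.inr ⟨hE21 heE2, d, hdAt,
          (inv.conf_iff e d).2 ⟨h.conf_symm d e hc, hE21 heE2, hdE1⟩⟩)
      · exact hCAn d hdCA hdCn
    · have hdC : d ∈ C := by
        rcases hdCn with h1 | h1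
        exacts [h1.1, absurd (hA1 h1) hdE1]
      exact inv.conf_out d hdC hdE1 e (hE21 heE2) hc
  · -- removed
    intro d hdR hdE2
    by_cases hdE1 : d ∈ R₁.carrier
    · have hor : d ∈ R₁.Ats A ∨ d ∈ R₁.CAs A := by
        by_contra hno; exact hdE2 ⟨hdE1, hno⟩
      rcases hor with hdAt | hdCA
      · exact Or.inl (hPinAt d hdAt)
      · obtain ⟨-, a, haAt, hconf⟩ := hdCA
        exact Or.inr ⟨hCAn d ⟨hdE1, a, haAt, hconf⟩, a, hPinAt a haAt,
          ((inv.conf_iff d a).1 hconf).1⟩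
    · rcases inv.removed d hdR hdE1 with hp | ⟨hdC, a, ha, hca⟩
      · exact Or.inl (hp.step h inv hen)
      · refine Or.inr ⟨?_, a, ha.step h inv hen, hca⟩
        rintro (h1 | h1)
        exacts [hdC h1.1, conf_pinned_notMem h inv hen ha hca h1]
  · -- unF
    intro b hb hbE2 hbF2
    by_cases hbF1 : b ∈ R₁.F
    · have hor : b ∈ ({e | e ∈ R₁.F ∧ ∃ a ∈ R₁.CAs A, R₁.rc a e} ∪
          {e | e ∈ R₁.F ∧ ∃ a ∈ R₁.Ats A, R₁.prev a e}) := by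
        by_contra hno; exact hbF2 ⟨⟨hbF1, hbE2⟩, hno⟩
      simp only [Set.mem_union, Set.mem_setOf_eq] at hor
      rcases hor with ⟨-, a, haCA, hrc₁⟩ | ⟨-, a, haAt, hp₁⟩
      · obtain ⟨haE1, p, hpAt, hconf₁⟩ := haCA
        exact Or.inl ⟨a, ((inv.rc_iff a b).1 hrc₁).1, hCAn a ⟨haE1, p, hpAt, hconf₁⟩,
          p, hPinAt p hpAt, ((inv.conf_iff a p).1 hconf₁).1⟩
      · exact Or.inr ⟨a, ((inv.prev_iff a b).1 hp₁).1, hPinAt a haAt⟩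
    · rcases inv.unF b hb (hE21 hbE2) hbF1 with ⟨w, hrc, hwC, a, ha, hca⟩ | ⟨w, hp, hpin⟩
      · refine Or.inl ⟨w, hrc, ?_, a, ha.step h inv hen, hca⟩
        rintro (h1 | h1)
        exacts [hwC h1.1, conf_pinned_notMem h inv hen ha hca h1]
      · exact Or.inr ⟨w, hp, hpin.step h inv hen⟩


lemma resid_C0 (inv : Inv R C R₁) (hen : R₁.Enabled (C ∩ R₁.carrier) A B)
    (h0 : R₁.C0 = C ∩ R₁.carrier) :
    (R₁.residStep A B).C0 = ((C \ B) ∪ A) ∩ (R₁.residStep A B).carrier := by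
  obtain ⟨-, -, hA1, -, -, -, -, -⟩ := id hen
  show ((R₁.C0 \ B) ∪ A) ∩ R₁.Ecar A = ((C \ B) ∪ A) ∩ R₁.Ecar A
  rw [h0]
  ext x
  constructor
  · rintro ⟨hx | hx, hxE⟩
    exacts [⟨Or.inl ⟨hx.1.1, hx.2⟩, hxE⟩, ⟨Or.inr hx, hxE⟩]
  · rintro ⟨hx | hx, hxE⟩
    exacts [⟨Or.inl ⟨⟨hx.1, hxE.1⟩, hx.2⟩, hxE⟩, ⟨Or.inr hx, hxE⟩]

lemma inter_step {S : Set E} (hA : A ⊆ S) :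
    ((C \ B) ∪ A) ∩ S = ((C ∩ S) \ B) ∪ A := by
  ext x
  constructor
  · rintro ⟨hx | hx, hxS⟩
    exacts [Or.inl ⟨⟨hx.1, hxS⟩, hx.2⟩, Or.inr hx]
  · rintro (hx | hx)
    exacts [⟨Or.inl ⟨hx.1.1, hx.2⟩, hx.1.2⟩, ⟨Or.inr hx, hA hx⟩]

/-- Invariant propagation along a trace of `R`. -/
lemma inv_traceFrom (h : R.IsRPES) (hcr : R.CauseRespecting) :
    ∀ (t : List (Set E × Set E)) (C C' : Set E) (R₁ : RPESData E L),
      Inv R C R₁ → R₁.C0 = C ∩ R₁.carrier → R.IsTraceFrom C t C' →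
      Inv R C' (R₁.resid t) ∧ (R₁.resid t).C0 = C' ∩ (R₁.resid t).carrier := by
  intro t
  induction t with
  | nil =>
      intro C C' R₁ inv h0 htr
      cases htr
      exact ⟨inv, h0⟩
  | cons p t ih =>
      intro C C' R₁ inv h0 htr
      obtain ⟨henR, htr⟩ := htr
      have hen₁ : R₁.Enabled (C ∩ R₁.carrier) p.1 p.2 := enabled_down h inv henR
      have inv' := inv_step_resid h hcr inv hen₁
      have h0' := resid_C0 inv hen₁ h0
      exact ih ((C \ p.2) ∪ p.1) C' (R₁.residStep p.1 p.2) inv' h0' htr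

/-- A trace of the residual structure lifts to a trace of the original one. -/
lemma trace_lift (h : R.IsRPES) (hcr : R.CauseRespecting) :
    ∀ (t' : List (Set E × Set E)) (C C₁' : Set E) (R₁ : RPESData E L),
      Inv R C R₁ → R₁.IsTraceFrom (C ∩ R₁.carrier) t' C₁' →
      ∃ C', R.IsTraceFrom C t' C' := by
  intro t'
  induction t' with
  | nil => exact fun C C₁' R₁ _ _ => ⟨C, rfl⟩
  | cons p t' ih =>
      intro C C₁' R₁ inv htr
      obtain ⟨hen₁, htr⟩ := htr
      have henR : R.Enabled C p.1 p.2 := enabled_lift h inv hen₁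
      have inv' := inv_step_config h inv hen₁
      have hA1 : p.1 ⊆ R₁.carrier := hen₁.2.2.1
      have heq : ((C ∩ R₁.carrier) \ p.2) ∪ p.1 = ((C \ p.2) ∪ p.1) ∩ R₁.carrier :=
        (inter_step hA1).symm
      rw [heq] at htr
      obtain ⟨C', htr'⟩ := ih ((C \ p.2) ∪ p.1) C₁' R₁ inv' htr
      exact ⟨C', henR, htr'⟩

lemma isTraceFrom_append {R : RPESData E L} :
    ∀ (t t' : List (Set E × Set E)) (C C' C'' : Set E),
      R.IsTraceFrom C t C' → R.IsTraceFrom C' t' C'' → R.IsTraceFrom C (t ++ t') C'' := by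
  intro t
  induction t with
  | nil =>
      intro t' C C' C'' h1 h2
      cases h1
      exact h2
  | cons p t ih =>
      rintro t' C C' C'' ⟨hen, h1⟩ h2
      exact ⟨hen, ih t' _ C' C'' h1 h2⟩

end Main

end RPESData

/-- If `t ∈ Traces(R)`, `R' = R \ t` and `t' ∈ Traces(R')`, then
`tt' ∈ Traces(R)` and `R \ (tt') = R' \ t'`. -/
theorem trace_concat_resid {E L : Type} (R : RPESData E L) (h : R.IsRPES)
    (hcr : R.CauseRespecting) (t t' : List (Set E × Set E))
    (ht : R.IsTrace t) (ht' : (R.resid t).IsTrace t') :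
    R.IsTrace (t ++ t') ∧ R.resid (t ++ t') = (R.resid t).resid t' := by
  obtain ⟨Ct, htt⟩ := ht
  have h00 : R.C0 = R.C0 ∩ R.carrier := (Set.inter_eq_left.mpr h.C0_carrier).symm
  obtain ⟨invT, h0T⟩ :=
    RPESData.inv_traceFrom h hcr t R.C0 Ct R (RPESData.inv_self R h) h00 htt
  obtain ⟨C'', htt'⟩ := ht'
  have htt'2 : (R.resid t).IsTraceFrom (Ct ∩ (R.resid t).carrier) t' C'' := by
    rw [← h0T]; exact htt'
  obtain ⟨C', htr'⟩ := RPESData.trace_lift h hcr t' Ct C'' (R.resid t) invT htt'2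
  refine ⟨⟨C', RPESData.isTraceFrom_append t t' R.C0 Ct C' htt htr'⟩, ?_⟩
  simp [RPESData.resid, List.foldl_append]
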